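/- arXiv:math/0101145 — 4 statements merged into one kernel-verified Lean document; each statement's English description precedes it below -/
import Mathlib

section
/- Let U ⊆ ℝ² be an open set with coordinates (u,v), let x, y : U → ℝ be C² functions satisfying the Cauchy–Riemann equations ∂_u x − ∂_v y = 0 and ∂_u y + ∂_v x = 0, and let z : U → ℝ be a C² harmonic function (∂²z/∂u² + ∂²z/∂v² = 0 on U). Then the 1-form ω = (∂_v z + x·∂_v y) du + (x·∂_v x − ∂_u z) dv is closed; that is, ∂_v(∂_v z + x·∂_v y) = ∂_u(x·∂_v x − ∂_u z) at every point of U. (This is the content of Lemma 4.15 of the paper: the mixed partials of any local primitive τ of ω agree, so τ can be constructed by the Poincaré lemma.) -/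
/-- Partial derivative with respect to the first coordinate `u`. -/
noncomputable def pdu (f : ℝ × ℝ → ℝ) (p : ℝ × ℝ) : ℝ := fderiv ℝ f p (1, 0)

/-- Partial derivative with respect to the second coordinate `v`. -/
noncomputable def pdv (f : ℝ × ℝ → ℝ) (p : ℝ × ℝ) : ℝ := fderiv ℝ f p (0, 1)

lemma pd_apply {f : ℝ × ℝ → ℝ} {p : ℝ × ℝ} (hf : ContDiffAt ℝ 2 f p) (v w : ℝ × ℝ) :
    fderiv ℝ (fun q => fderiv ℝ f q w) p v = fderiv ℝ (fderiv ℝ f) p v w := by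
  have hd : DifferentiableAt ℝ (fderiv ℝ f) p :=
    (hf.fderiv_right (m := 1) le_rfl).differentiableAt one_ne_zero
  have := fderiv_clm_apply (𝕜 := ℝ) hd (differentiableAt_const w)
  rw [show (fun q => fderiv ℝ f q w) = (fun q => (fderiv ℝ f q) ((fun _ => w) q)) from rfl, this]
  simp

lemma pd_comm {f : ℝ × ℝ → ℝ} {p : ℝ × ℝ} (hf : ContDiffAt ℝ 2 f p) (v w : ℝ × ℝ) :
    fderiv ℝ (fun q => fderiv ℝ f q w) p v = fderiv ℝ (fun q => fderiv ℝ f q v) p w := by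
  rw [pd_apply hf, pd_apply hf]
  exact hf.isSymmSndFDerivAt (by simp) v w

lemma pd_diff {f : ℝ × ℝ → ℝ} {p : ℝ × ℝ} (hf : ContDiffAt ℝ 2 f p) (w : ℝ × ℝ) :
    DifferentiableAt ℝ (fun q => fderiv ℝ f q w) p :=
  ((hf.fderiv_right (m := 1) le_rfl).differentiableAt one_ne_zero).clm_apply
    (differentiableAt_const w)

/-- **Lemma 4.15**: if `x, y` satisfy the Cauchy–Riemann equations on an open set
`U ⊆ ℝ²` and `z` is harmonic on `U`, then the 1-form
`ω = (∂_v z + x ∂_v y) du + (x ∂_v x − ∂_u z) dv` is closed, i.e. the mixed partials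
of any local primitive `τ` of `ω` agree. -/
theorem omega_closed
    (U : Set (ℝ × ℝ)) (hU : IsOpen U)
    (x y z : ℝ × ℝ → ℝ)
    (hx : ContDiffOn ℝ 2 x U) (hy : ContDiffOn ℝ 2 y U) (hz : ContDiffOn ℝ 2 z U)
    (hCR1 : ∀ p ∈ U, pdu x p - pdv y p = 0)
    (hCR2 : ∀ p ∈ U, pdu y p + pdv x p = 0)
    (hharm : ∀ p ∈ U, pdu (pdu z) p + pdv (pdv z) p = 0) :
    ∀ p ∈ U,
      pdv (fun q => pdv z q + x q * pdv y q) p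
        = pdu (fun q => x q * pdv x q - pdu z q) p := by
  intro p hp
  have hmem : U ∈ nhds p := hU.mem_nhds hp
  have hxA : ContDiffAt ℝ 2 x p := hx.contDiffAt hmem
  have hyA : ContDiffAt ℝ 2 y p := hy.contDiffAt hmem
  have hzA : ContDiffAt ℝ 2 z p := hz.contDiffAt hmem
  have hxd : DifferentiableAt ℝ x p := hxA.differentiableAt two_ne_zero
  simp only [pdu, pdv] at *
  set e1 : ℝ × ℝ := (1, 0)
  set e2 : ℝ × ℝ := (0, 1)
  -- expand left side
  have hL : fderiv ℝ (fun q => fderiv ℝ z q e2 + x q * fderiv ℝ y q e2) p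
      = fderiv ℝ (fun q => fderiv ℝ z q e2) p
        + (x p • fderiv ℝ (fun q => fderiv ℝ y q e2) p + fderiv ℝ y p e2 • fderiv ℝ x p) := by
    rw [fderiv_fun_add (pd_diff hzA e2) (hxd.fun_mul (pd_diff hyA e2)),
      fderiv_fun_mul hxd (pd_diff hyA e2)]
  have hR : fderiv ℝ (fun q => x q * fderiv ℝ x q e2 - fderiv ℝ z q e1) p
      = (x p • fderiv ℝ (fun q => fderiv ℝ x q e2) p + fderiv ℝ x p e2 • fderiv ℝ x p)
        - fderiv ℝ (fun q => fderiv ℝ z q e1) p := by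
    rw [fderiv_fun_sub (hxd.fun_mul (pd_diff hxA e2)) (pd_diff hzA e1),
      fderiv_fun_mul hxd (pd_diff hxA e2)]
  rw [hL, hR]
  simp only [ContinuousLinearMap.add_apply, ContinuousLinearMap.sub_apply,
    ContinuousLinearMap.smul_apply, smul_eq_mul]
  -- key identities
  have harm : fderiv ℝ (fun q => fderiv ℝ z q e1) p e1
      + fderiv ℝ (fun q => fderiv ℝ z q e2) p e2 = 0 := hharm p hp
  have hcr : fderiv ℝ x p e1 = fderiv ℝ y p e2 := by
    have := hCR1 p hp; linarith
  have heq : (fun q => fderiv ℝ y q e2) =ᶠ[nhds p] (fun q => fderiv ℝ x q e1) := by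
    filter_upwards [hmem] with q hq
    have := hCR1 q hq; linarith
  have hmid : fderiv ℝ (fun q => fderiv ℝ y q e2) p e2
      = fderiv ℝ (fun q => fderiv ℝ x q e2) p e1 := by
    rw [heq.fderiv_eq, pd_comm hxA e2 e1]
  rw [hmid, hcr]
  linarith
end

section
/- Let U ⊆ ℝ² be a convex open set with coordinates (u,v), let x, y : U → ℝ be C² functions satisfying the Cauchy–Riemann equations ∂_u x − ∂_v y = 0 and ∂_u y + ∂_v x = 0, and let z : U → ℝ be a C² harmonic function. Then there exists a C² function τ : U → ℝ such that ∂_u τ = ∂_v z + x·∂_v y and ∂_v τ = x·∂_v x − ∂_u z on U; consequently (x,y,z,τ) satisfies the full ∂̄_J system (i) ∂_u x − ∂_v y = 0, (ii) ∂_u y + ∂_v x = 0, (iii) ∂_u τ − ∂_v z = x·∂_v y, (iv) ∂_u z + ∂_v τ = x·∂_v x. Moreover, if U is nonempty and connected, any two such functions τ differ by an additive constant. (This is the lifting step, via Lemmas 4.14–4.15 and the Poincaré lemma, in the proof of the Translation Theorem.) -/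
open Set Metric intervalIntegral ContinuousLinearMap
open scoped Interval

lemma clm_eval (L : ℝ × ℝ →L[ℝ] ℝ) (e : ℝ × ℝ) :
    L e = e.1 * L (1, 0) + e.2 * L (0, 1) := by
  have h : e = e.1 • ((1:ℝ), (0:ℝ)) + e.2 • ((0:ℝ), (1:ℝ)) := by
    simp [Prod.ext_iff]
  nth_rewrite 1 [h]
  rw [map_add, map_smul, map_smul]; simp

lemma clm_eq_zero (L : ℝ × ℝ →L[ℝ] ℝ) (h1 : L (1,0) = 0) (h2 : L (0,1) = 0) : L = 0 :=
  ContinuousLinearMap.ext fun e => by rw [clm_eval L e, h1, h2]; simp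

set_option maxHeartbeats 1000000 in
lemma poincare {U : Set (ℝ × ℝ)} (hU : IsOpen U) (hconv : Convex ℝ U)
    {P Q : ℝ × ℝ → ℝ} (hP : ContDiffOn ℝ 1 P U) (hQ : ContDiffOn ℝ 1 Q U)
    (hclosed : ∀ p ∈ U, fderiv ℝ P p (0, 1) = fderiv ℝ Q p (1, 0))
    {p₀ : ℝ × ℝ} (hp₀ : p₀ ∈ U) :
    ∃ τ : ℝ × ℝ → ℝ, ∀ p ∈ U,
      HasFDerivAt τ (P p • ContinuousLinearMap.fst ℝ ℝ ℝ + Q p • ContinuousLinearMap.snd ℝ ℝ ℝ) p := by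
  classical
  set c : (ℝ × ℝ) → ℝ → ℝ × ℝ := fun q t => p₀ + t • (q - p₀) with hcdef
  set φ : (ℝ × ℝ) → ℝ → ℝ :=
    fun q t => P (c q t) * (q.1 - p₀.1) + Q (c q t) * (q.2 - p₀.2) with hφdef
  have hccont : ∀ q, Continuous (c q) := fun q => by fun_prop
  -- differentiability points
  have hPdiff : ∀ q ∈ U, HasFDerivAt P (fderiv ℝ P q) q := fun q hq =>
    ((hP.contDiffAt (hU.mem_nhds hq)).differentiableAt one_ne_zero).hasFDerivAt
  have hQdiff : ∀ q ∈ U, HasFDerivAt Q (fderiv ℝ Q q) q := fun q hq =>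
    ((hQ.contDiffAt (hU.mem_nhds hq)).differentiableAt one_ne_zero).hasFDerivAt
  have hDPcont : ContinuousOn (fderiv ℝ P) U := hP.continuousOn_fderiv_of_isOpen hU le_rfl
  have hDQcont : ContinuousOn (fderiv ℝ Q) U := hQ.continuousOn_fderiv_of_isOpen hU le_rfl
  refine ⟨fun q => ∫ t in (0:ℝ)..1, φ q t, fun p hp => ?_⟩
  -- compact convex neighborhood of the segment
  have hS : IsCompact (segment ℝ p₀ p) := by
    rw [segment_eq_image ℝ p₀ p]
    exact isCompact_Icc.image (by fun_prop)
  have hSU : segment ℝ p₀ p ⊆ U := hconv.segment_subset hp₀ hp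
  obtain ⟨δ, δpos, hKU⟩ := hS.exists_cthickening_subset_open hU hSU
  set K := cthickening δ (segment ℝ p₀ p) with hKdef
  have hK : IsCompact K := hS.cthickening
  have hKconv : Convex ℝ K := (convex_segment p₀ p).cthickening δ
  have hp₀K : p₀ ∈ K := self_subset_cthickening _ (left_mem_segment ℝ p₀ p)
  have hballK : ball p δ ⊆ K := fun q hq =>
    mem_cthickening_of_dist_le q p δ _ (right_mem_segment ℝ p₀ p) (le_of_lt (mem_ball.mp hq))
  have hmem : ∀ q ∈ ball p δ, ∀ t ∈ Icc (0:ℝ) 1, c q t ∈ K := by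
    intro q hq t ht
    have : c q t ∈ segment ℝ p₀ q := by
      rw [segment_eq_image ℝ p₀ q]
      exact ⟨t, ht, by simp only [hcdef]; module⟩
    exact hKconv.segment_subset hp₀K (hballK hq) this
  have hmemU : ∀ q ∈ ball p δ, ∀ t ∈ Icc (0:ℝ) 1, c q t ∈ U := fun q hq t ht =>
    hKU (hmem q hq t ht)
  -- bounds on K
  obtain ⟨C₁, hC₁⟩ := hK.exists_bound_of_continuousOn (hP.continuousOn.mono hKU)
  obtain ⟨C₂, hC₂⟩ := hK.exists_bound_of_continuousOn (hQ.continuousOn.mono hKU)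
  obtain ⟨C₃, hC₃⟩ := hK.exists_bound_of_continuousOn (hDPcont.mono hKU)
  obtain ⟨C₄, hC₄⟩ := hK.exists_bound_of_continuousOn (hDQcont.mono hKU)
  set R : ℝ := ‖p - p₀‖ + δ with hRdef
  have hqbound : ∀ q ∈ ball p δ, ‖q - p₀‖ ≤ R := by
    intro q hq
    calc ‖q - p₀‖ = ‖(q - p) + (p - p₀)‖ := by ring_nf
    _ ≤ ‖q - p‖ + ‖p - p₀‖ := norm_add_le _ _
    _ ≤ δ + ‖p - p₀‖ := by
        have := mem_ball_iff_norm.mp hq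
        linarith
    _ = R := by rw [hRdef]; ring
  -- the candidate fderiv of the parametrized integrand
  set F' : (ℝ × ℝ) → ℝ → (ℝ × ℝ) →L[ℝ] ℝ := fun q t =>
    ((q.1 - p₀.1) • (t • fderiv ℝ P (c q t)) + P (c q t) • ContinuousLinearMap.fst ℝ ℝ ℝ)
    + ((q.2 - p₀.2) • (t • fderiv ℝ Q (c q t)) + Q (c q t) • ContinuousLinearMap.snd ℝ ℝ ℝ)
    with hF'def
  -- differentiability of the integrand in q
  have hdiff : ∀ t ∈ Icc (0:ℝ) 1, ∀ q ∈ ball p δ,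
      HasFDerivAt (fun q' => φ q' t) (F' q t) q := by
    intro t ht q hq
    have hcU : c q t ∈ U := hmemU q hq t ht
    have hcq : HasFDerivAt (fun q' => c q' t)
        (t • ContinuousLinearMap.id ℝ (ℝ × ℝ)) q := by
      have : HasFDerivAt (fun q' : ℝ × ℝ => p₀ + t • (q' - p₀))
          (t • ContinuousLinearMap.id ℝ (ℝ × ℝ)) q :=
        (((hasFDerivAt_id q).sub_const p₀).const_smul t).const_add p₀
      exact this
    have hPc : HasFDerivAt (fun q' => P (c q' t)) (t • fderiv ℝ P (c q t)) q := by
      have := (hPdiff _ hcU).comp q hcq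
      refine this.congr_fderiv ?_
      exact ContinuousLinearMap.ext fun e => by simp
    have hQc : HasFDerivAt (fun q' => Q (c q' t)) (t • fderiv ℝ Q (c q t)) q := by
      have := (hQdiff _ hcU).comp q hcq
      refine this.congr_fderiv ?_
      exact ContinuousLinearMap.ext fun e => by simp
    have h1 : HasFDerivAt (fun q' : ℝ × ℝ => q'.1 - p₀.1)
        (ContinuousLinearMap.fst ℝ ℝ ℝ) q := (hasFDerivAt_fst).sub_const _
    have h2 : HasFDerivAt (fun q' : ℝ × ℝ => q'.2 - p₀.2)
        (ContinuousLinearMap.snd ℝ ℝ ℝ) q := (hasFDerivAt_snd).sub_const _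
    have := (hPc.fun_mul' h1).add (hQc.fun_mul' h2)
    refine this.congr_fderiv ?_
    rw [hF'def]
    exact ContinuousLinearMap.ext fun e => by simp [smul_eq_mul]; ring
  -- continuity facts
  have huIcc : uIcc (0:ℝ) 1 = Icc 0 1 := uIcc_of_le zero_le_one
  have hIoc_sub : Ι (0:ℝ) 1 ⊆ Icc 0 1 := by
    rw [uIoc_of_le zero_le_one]; exact Ioc_subset_Icc_self
  have hφcont : ∀ q ∈ ball p δ, ContinuousOn (fun t => φ q t) (Icc (0:ℝ) 1) := by
    intro q hq
    have hPc : ContinuousOn (fun t => P (c q t)) (Icc (0:ℝ) 1) :=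
      (hP.continuousOn.mono hKU).comp (hccont q).continuousOn (fun t ht => hmem q hq t ht)
    have hQc : ContinuousOn (fun t => Q (c q t)) (Icc (0:ℝ) 1) :=
      (hQ.continuousOn.mono hKU).comp (hccont q).continuousOn (fun t ht => hmem q hq t ht)
    exact (hPc.mul continuousOn_const).add (hQc.mul continuousOn_const)
  have hpball : p ∈ ball p δ := mem_ball_self δpos
  have hF'cont : ContinuousOn (fun t => F' p t) (Icc (0:ℝ) 1) := by
    have hPc : ContinuousOn (fun t => P (c p t)) (Icc (0:ℝ) 1) :=
      (hP.continuousOn.mono hKU).comp (hccont p).continuousOn (fun t ht => hmem p hpball t ht)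
    have hQc : ContinuousOn (fun t => Q (c p t)) (Icc (0:ℝ) 1) :=
      (hQ.continuousOn.mono hKU).comp (hccont p).continuousOn (fun t ht => hmem p hpball t ht)
    have hDP : ContinuousOn (fun t => fderiv ℝ P (c p t)) (Icc (0:ℝ) 1) :=
      hDPcont.comp (hccont p).continuousOn (fun t ht => hmemU p hpball t ht)
    have hDQ : ContinuousOn (fun t => fderiv ℝ Q (c p t)) (Icc (0:ℝ) 1) :=
      hDQcont.comp (hccont p).continuousOn (fun t ht => hmemU p hpball t ht)
    show ContinuousOn (fun t => ((p.1 - p₀.1) • (t • fderiv ℝ P (c p t)) + P (c p t) • ContinuousLinearMap.fst ℝ ℝ ℝ)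
      + ((p.2 - p₀.2) • (t • fderiv ℝ Q (c p t)) + Q (c p t) • ContinuousLinearMap.snd ℝ ℝ ℝ)) (Icc (0:ℝ) 1)
    exact ((continuousOn_const.fun_smul (continuousOn_id.fun_smul hDP)).fun_add
      (hPc.fun_smul continuousOn_const)).fun_add
      ((continuousOn_const.fun_smul (continuousOn_id.fun_smul hDQ)).fun_add (hQc.fun_smul continuousOn_const))
  -- bounds
  have hC₁0 : 0 ≤ C₁ := le_trans (norm_nonneg _) (hC₁ p₀ hp₀K)
  have hC₂0 : 0 ≤ C₂ := le_trans (norm_nonneg _) (hC₂ p₀ hp₀K)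
  have hC₃0 : 0 ≤ C₃ := le_trans (norm_nonneg _) (hC₃ p₀ hp₀K)
  have hC₄0 : 0 ≤ C₄ := le_trans (norm_nonneg _) (hC₄ p₀ hp₀K)
  have hR0 : (0:ℝ) ≤ R := by positivity
  set B : ℝ := R * C₃ + C₁ + (R * C₄ + C₂) with hBdef
  have hfstnorm : ‖ContinuousLinearMap.fst ℝ ℝ ℝ‖ ≤ 1 :=
    ContinuousLinearMap.opNorm_le_bound _ zero_le_one fun e => by simpa using norm_fst_le e
  have hsndnorm : ‖ContinuousLinearMap.snd ℝ ℝ ℝ‖ ≤ 1 :=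
    ContinuousLinearMap.opNorm_le_bound _ zero_le_one fun e => by simpa using norm_snd_le e
  have hbound : ∀ t ∈ Ι (0:ℝ) 1, ∀ q ∈ ball p δ, ‖F' q t‖ ≤ B := by
    intro t ht q hq
    have ht' : t ∈ Icc (0:ℝ) 1 := hIoc_sub ht
    have htabs : ‖t‖ ≤ 1 := by
      rw [Real.norm_eq_abs, abs_le]; exact ⟨by linarith [ht'.1], ht'.2⟩
    have hq1 : ‖q.1 - p₀.1‖ ≤ R :=
      le_trans (norm_fst_le (q - p₀)) (hqbound q hq)
    have hq2 : ‖q.2 - p₀.2‖ ≤ R :=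
      le_trans (norm_snd_le (q - p₀)) (hqbound q hq)
    have hcK := hmem q hq t ht'
    have e1 : ‖(q.1 - p₀.1) • t • fderiv ℝ P (c q t)‖ ≤ R * C₃ := by
      rw [norm_smul, norm_smul]
      calc ‖q.1 - p₀.1‖ * (‖t‖ * ‖fderiv ℝ P (c q t)‖) ≤ R * (1 * C₃) := by
            apply mul_le_mul hq1 _ (by positivity) hR0
            exact mul_le_mul htabs (hC₃ _ hcK) (norm_nonneg _) zero_le_one
      _ = R * C₃ := by ring
    have e3 : ‖(q.2 - p₀.2) • t • fderiv ℝ Q (c q t)‖ ≤ R * C₄ := by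
      rw [norm_smul, norm_smul]
      calc ‖q.2 - p₀.2‖ * (‖t‖ * ‖fderiv ℝ Q (c q t)‖) ≤ R * (1 * C₄) := by
            apply mul_le_mul hq2 _ (by positivity) hR0
            exact mul_le_mul htabs (hC₄ _ hcK) (norm_nonneg _) zero_le_one
      _ = R * C₄ := by ring
    have e2 : ‖P (c q t) • ContinuousLinearMap.fst ℝ ℝ ℝ‖ ≤ C₁ := by
      refine ContinuousLinearMap.opNorm_le_bound _ hC₁0 fun w => ?_
      simp only [ContinuousLinearMap.smul_apply, ContinuousLinearMap.coe_fst']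
      rw [norm_smul]
      exact mul_le_mul (hC₁ _ hcK) (norm_fst_le w) (norm_nonneg _) hC₁0
    have e4 : ‖Q (c q t) • ContinuousLinearMap.snd ℝ ℝ ℝ‖ ≤ C₂ := by
      refine ContinuousLinearMap.opNorm_le_bound _ hC₂0 fun w => ?_
      simp only [ContinuousLinearMap.smul_apply, ContinuousLinearMap.coe_snd']
      rw [norm_smul]
      exact mul_le_mul (hC₂ _ hcK) (norm_snd_le w) (norm_nonneg _) hC₂0
    calc ‖F' q t‖ ≤ ‖(q.1 - p₀.1) • t • fderiv ℝ P (c q t)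
            + P (c q t) • ContinuousLinearMap.fst ℝ ℝ ℝ‖
          + ‖(q.2 - p₀.2) • t • fderiv ℝ Q (c q t)
            + Q (c q t) • ContinuousLinearMap.snd ℝ ℝ ℝ‖ := norm_add_le _ _
    _ ≤ (‖(q.1 - p₀.1) • t • fderiv ℝ P (c q t)‖
            + ‖P (c q t) • ContinuousLinearMap.fst ℝ ℝ ℝ‖)
          + (‖(q.2 - p₀.2) • t • fderiv ℝ Q (c q t)‖
            + ‖Q (c q t) • ContinuousLinearMap.snd ℝ ℝ ℝ‖) :=
        add_le_add (norm_add_le _ _) (norm_add_le _ _)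
    _ ≤ B := by rw [hBdef]; linarith
  -- differentiation under the integral sign
  have key : HasFDerivAt (fun q => ∫ t in (0:ℝ)..1, φ q t)
      (∫ t in (0:ℝ)..1, F' p t) p := by
    apply intervalIntegral.hasFDerivAt_integral_of_dominated_of_fderiv_le
      (F' := F') (bound := fun _ => B) (ball_mem_nhds p δpos)
    · filter_upwards [ball_mem_nhds p δpos] with q hq
      exact (((hφcont q hq).mono hIoc_sub)).aestronglyMeasurable measurableSet_uIoc
    · exact ((hφcont p hpball).mono (huIcc ▸ subset_rfl)).intervalIntegrable
    · exact ((hF'cont.mono hIoc_sub)).aestronglyMeasurable measurableSet_uIoc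
    · exact Filter.Eventually.of_forall hbound
    · exact intervalIntegrable_const
    · exact Filter.Eventually.of_forall
        (fun t ht q hq => hdiff t (hIoc_sub ht) q hq)
  -- identify the derivative
  have hF'int : IntervalIntegrable (fun t => F' p t) MeasureTheory.volume 0 1 :=
    (hF'cont.mono (huIcc ▸ subset_rfl)).intervalIntegrable
  have heq : (∫ t in (0:ℝ)..1, F' p t)
      = P p • ContinuousLinearMap.fst ℝ ℝ ℝ + Q p • ContinuousLinearMap.snd ℝ ℝ ℝ := by
    refine ContinuousLinearMap.ext fun e => ?_
    rw [ContinuousLinearMap.intervalIntegral_apply hF'int e]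
    set g : ℝ → ℝ := fun t => t * (P (c p t) * e.1 + Q (c p t) * e.2) with hgdef
    have hderiv : ∀ t ∈ uIcc (0:ℝ) 1, HasDerivAt g ((F' p t) e) t := by
      intro t ht
      rw [huIcc] at ht
      have hcU : c p t ∈ U := hmemU p hpball t ht
      have hct : HasDerivAt (fun s : ℝ => c p s) (p - p₀) t := by
        have : HasDerivAt (fun s : ℝ => p₀ + s • (p - p₀)) ((1:ℝ) • (p - p₀)) t :=
          ((hasDerivAt_id t).smul_const (p - p₀)).const_add p₀
        rw [one_smul] at this; exact this
      have hPt : HasDerivAt (fun s => P (c p s)) (fderiv ℝ P (c p t) (p - p₀)) t :=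
        (hPdiff _ hcU).comp_hasDerivAt t hct
      have hQt : HasDerivAt (fun s => Q (c p s)) (fderiv ℝ Q (c p t) (p - p₀)) t :=
        (hQdiff _ hcU).comp_hasDerivAt t hct
      have hg : HasDerivAt g
          (1 * (P (c p t) * e.1 + Q (c p t) * e.2)
            + t * (fderiv ℝ P (c p t) (p - p₀) * e.1 + fderiv ℝ Q (c p t) (p - p₀) * e.2)) t :=
        (hasDerivAt_id t).mul ((hPt.mul_const e.1).add (hQt.mul_const e.2))
      convert hg using 1
      have hcl : fderiv ℝ P (c p t) (0, 1) = fderiv ℝ Q (c p t) (1, 0) := hclosed _ hcU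
      rw [hF'def]
      simp only [ContinuousLinearMap.add_apply, ContinuousLinearMap.smul_apply,
        ContinuousLinearMap.coe_fst', ContinuousLinearMap.coe_snd', smul_eq_mul]
      rw [clm_eval (fderiv ℝ P (c p t)) e, clm_eval (fderiv ℝ Q (c p t)) e,
          clm_eval (fderiv ℝ P (c p t)) (p - p₀), clm_eval (fderiv ℝ Q (c p t)) (p - p₀)]
      simp only [Prod.fst_sub, Prod.snd_sub]
      linear_combination (t * (e.2 * (p.1 - p₀.1) - e.1 * (p.2 - p₀.2))) * hcl
    have hint : IntervalIntegrable (fun t => (F' p t) e) MeasureTheory.volume 0 1 := by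
      apply ContinuousOn.intervalIntegrable
      have happ : Continuous (fun L : (ℝ × ℝ) →L[ℝ] ℝ => L e) :=
        (ContinuousLinearMap.apply ℝ ℝ e).continuous
      exact happ.comp_continuousOn (hF'cont.mono (huIcc ▸ subset_rfl))
    have := intervalIntegral.integral_eq_sub_of_hasDerivAt hderiv hint
    rw [this]
    have hc1 : c p 1 = p := by simp [hcdef]
    have hc0 : c p 0 = p₀ := by simp [hcdef]
    rw [hgdef]
    simp only [hc1, hc0]
    simp only [ContinuousLinearMap.add_apply, ContinuousLinearMap.smul_apply,
      ContinuousLinearMap.coe_fst', ContinuousLinearMap.coe_snd', smul_eq_mul]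
    ring
  rw [heq] at key
  exact key

lemma pd_add {f g : ℝ × ℝ → ℝ} {p : ℝ × ℝ} (v : ℝ × ℝ)
    (hf : DifferentiableAt ℝ f p) (hg : DifferentiableAt ℝ g p) :
    fderiv ℝ (fun q => f q + g q) p v = fderiv ℝ f p v + fderiv ℝ g p v := by
  rw [fderiv_fun_add hf hg]; simp

lemma pd_sub {f g : ℝ × ℝ → ℝ} {p : ℝ × ℝ} (v : ℝ × ℝ)
    (hf : DifferentiableAt ℝ f p) (hg : DifferentiableAt ℝ g p) :
    fderiv ℝ (fun q => f q - g q) p v = fderiv ℝ f p v - fderiv ℝ g p v := by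
  rw [fderiv_fun_sub hf hg]; simp

lemma pd_mul {f g : ℝ × ℝ → ℝ} {p : ℝ × ℝ} (v : ℝ × ℝ)
    (hf : DifferentiableAt ℝ f p) (hg : DifferentiableAt ℝ g p) :
    fderiv ℝ (fun q => f q * g q) p v = f p * fderiv ℝ g p v + g p * fderiv ℝ f p v := by
  rw [fderiv_fun_mul hf hg]; simp

lemma schwarz {f : ℝ × ℝ → ℝ} {p : ℝ × ℝ} (hf : ContDiffAt ℝ 2 f p) (v w : ℝ × ℝ) :
    fderiv ℝ (fun q => fderiv ℝ f q v) p w = fderiv ℝ (fun q => fderiv ℝ f q w) p v := by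
  have hdf : DifferentiableAt ℝ (fderiv ℝ f) p :=
    (hf.fderiv_right (m := 1) (by norm_num)).differentiableAt one_ne_zero
  have h1 : fderiv ℝ (fun q => fderiv ℝ f q v) p = (fderiv ℝ (fderiv ℝ f) p).flip v := by
    rw [fderiv_clm_apply hdf (differentiableAt_const v)]
    refine ContinuousLinearMap.ext fun w' => ?_; simp
  have h2 : fderiv ℝ (fun q => fderiv ℝ f q w) p = (fderiv ℝ (fderiv ℝ f) p).flip w := by
    rw [fderiv_clm_apply hdf (differentiableAt_const w)]
    refine ContinuousLinearMap.ext fun w' => ?_; simp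
  rw [h1, h2]
  simp only [ContinuousLinearMap.flip_apply]
  exact (hf.isSymmSndFDerivAt (by simp)) w v

lemma contDiffOn_pd {f : ℝ × ℝ → ℝ} {U : Set (ℝ × ℝ)} (hU : IsOpen U)
    (hf : ContDiffOn ℝ 2 f U) (v : ℝ × ℝ) :
    ContDiffOn ℝ 1 (fun p => fderiv ℝ f p v) U := by
  have h2 : ContDiffOn ℝ (1 + 1) f U := by rw [one_add_one_eq_two]; exact hf
  exact (((contDiffOn_succ_iff_fderiv_of_isOpen hU).mp h2).2.2).clm_apply contDiffOn_const

lemma pdu_eq (f : ℝ × ℝ → ℝ) : pdu f = fun p => fderiv ℝ f p (1, 0) := rfl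
lemma pdv_eq (f : ℝ × ℝ → ℝ) : pdv f = fun p => fderiv ℝ f p (0, 1) := rfl

set_option maxHeartbeats 1000000 in
/-- **The lifting step in the Translation Theorem** (via Lemmas 4.14–4.15 and the
Poincaré lemma): given CR functions `x, y` and a harmonic function `z` on a convex
open set `U ⊆ ℝ²`, there is a C² function `τ` with
`∂_u τ = ∂_v z + x ∂_v y` and `∂_v τ = x ∂_v x − ∂_u z` on `U`; consequently
`(x, y, z, τ)` satisfies the full `∂̄_J` system.  Moreover, if `U` is nonempty and
connected, any two such `τ` differ by an additive constant. -/
theorem lift_tau_exists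
    (U : Set (ℝ × ℝ)) (hU : IsOpen U) (hconv : Convex ℝ U)
    (x y z : ℝ × ℝ → ℝ)
    (hx : ContDiffOn ℝ 2 x U) (hy : ContDiffOn ℝ 2 y U) (hz : ContDiffOn ℝ 2 z U)
    (hCR1 : ∀ p ∈ U, pdu x p - pdv y p = 0)
    (hCR2 : ∀ p ∈ U, pdu y p + pdv x p = 0)
    (hharm : ∀ p ∈ U, pdu (pdu z) p + pdv (pdv z) p = 0) :
    (∃ τ : ℝ × ℝ → ℝ, ContDiffOn ℝ 2 τ U ∧
      (∀ p ∈ U, pdu τ p = pdv z p + x p * pdv y p) ∧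
      (∀ p ∈ U, pdv τ p = x p * pdv x p - pdu z p) ∧
      (∀ p ∈ U,
        pdu x p - pdv y p = 0 ∧
        pdu y p + pdv x p = 0 ∧
        pdu τ p - pdv z p = x p * pdv y p ∧
        pdu z p + pdv τ p = x p * pdv x p)) ∧
    (U.Nonempty → IsConnected U →
      ∀ τ₁ τ₂ : ℝ × ℝ → ℝ,
        ContDiffOn ℝ 2 τ₁ U → ContDiffOn ℝ 2 τ₂ U →
        (∀ p ∈ U, pdu τ₁ p = pdv z p + x p * pdv y p ∧
                  pdv τ₁ p = x p * pdv x p - pdu z p) →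
        (∀ p ∈ U, pdu τ₂ p = pdv z p + x p * pdv y p ∧
                  pdv τ₂ p = x p * pdv x p - pdu z p) →
        ∃ c : ℝ, ∀ p ∈ U, τ₁ p = τ₂ p + c) := by
  constructor
  · -- existence
    rcases Set.eq_empty_or_nonempty U with hUe | ⟨p₀, hp₀⟩
    · subst hUe
      exact ⟨0, fun p hp => absurd hp (Set.notMem_empty p),
        fun p hp => absurd hp (Set.notMem_empty p),
        fun p hp => absurd hp (Set.notMem_empty p),
        fun p hp => absurd hp (Set.notMem_empty p)⟩
    · have hx1 : ContDiffOn ℝ 1 x U := hx.of_le one_le_two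
      have hP1 : ContDiffOn ℝ 1
          (fun q => fderiv ℝ z q (0, 1) + x q * fderiv ℝ y q (0, 1)) U :=
        (contDiffOn_pd hU hz (0, 1)).add (hx1.mul (contDiffOn_pd hU hy (0, 1)))
      have hQ1 : ContDiffOn ℝ 1
          (fun q => x q * fderiv ℝ x q (0, 1) - fderiv ℝ z q (1, 0)) U :=
        (hx1.mul (contDiffOn_pd hU hx (0, 1))).sub (contDiffOn_pd hU hz (1, 0))
      have hclosed : ∀ p ∈ U,
          fderiv ℝ (fun q => fderiv ℝ z q (0, 1) + x q * fderiv ℝ y q (0, 1)) p (0, 1)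
          = fderiv ℝ (fun q => x q * fderiv ℝ x q (0, 1) - fderiv ℝ z q (1, 0)) p (1, 0) := by
        intro p hp
        have hnh := hU.mem_nhds hp
        have hxd : DifferentiableAt ℝ x p := (hx.contDiffAt hnh).differentiableAt two_ne_zero
        have hyd : DifferentiableAt ℝ y p := (hy.contDiffAt hnh).differentiableAt two_ne_zero
        have hdxv : DifferentiableAt ℝ (fun q => fderiv ℝ x q (0, 1)) p :=
          (((hx.contDiffAt hnh).fderiv_right (m := 1)
            (by norm_num)).differentiableAt one_ne_zero).clm_apply (differentiableAt_const _)
        have hdyv : DifferentiableAt ℝ (fun q => fderiv ℝ y q (0, 1)) p :=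
          (((hy.contDiffAt hnh).fderiv_right (m := 1)
            (by norm_num)).differentiableAt one_ne_zero).clm_apply (differentiableAt_const _)
        have hdzv : DifferentiableAt ℝ (fun q => fderiv ℝ z q (0, 1)) p :=
          (((hz.contDiffAt hnh).fderiv_right (m := 1)
            (by norm_num)).differentiableAt one_ne_zero).clm_apply (differentiableAt_const _)
        have hdzu : DifferentiableAt ℝ (fun q => fderiv ℝ z q (1, 0)) p :=
          (((hz.contDiffAt hnh).fderiv_right (m := 1)
            (by norm_num)).differentiableAt one_ne_zero).clm_apply (differentiableAt_const _)
        -- expand both sides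
        have hL : fderiv ℝ (fun q => fderiv ℝ z q (0, 1) + x q * fderiv ℝ y q (0, 1)) p (0, 1)
            = fderiv ℝ (fun q => fderiv ℝ z q (0, 1)) p (0, 1)
              + (x p * fderiv ℝ (fun q => fderiv ℝ y q (0, 1)) p (0, 1)
                + fderiv ℝ y p (0, 1) * fderiv ℝ x p (0, 1)) := by
          rw [(hdzv.hasFDerivAt.fun_add (hxd.hasFDerivAt.fun_mul' hdyv.hasFDerivAt)).fderiv]
          simp [mul_comm]
        have hR : fderiv ℝ (fun q => x q * fderiv ℝ x q (0, 1) - fderiv ℝ z q (1, 0)) p (1, 0)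
            = (x p * fderiv ℝ (fun q => fderiv ℝ x q (0, 1)) p (1, 0)
                + fderiv ℝ x p (0, 1) * fderiv ℝ x p (1, 0))
              - fderiv ℝ (fun q => fderiv ℝ z q (1, 0)) p (1, 0) := by
          rw [((hxd.hasFDerivAt.fun_mul' hdxv.hasFDerivAt).fun_sub hdzu.hasFDerivAt).fderiv]
          simp [mul_comm]
        rw [hL, hR]
        -- harmonicity
        have hh := hharm p hp
        simp only [pdu_eq, pdv_eq] at hh
        -- CR1 as eventual equality, differentiate in v
        have hCRev : (fun q => fderiv ℝ y q (0, 1)) =ᶠ[nhds p] (fun q => fderiv ℝ x q (1, 0)) := by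
          filter_upwards [hU.mem_nhds hp] with q hq
          have := hCR1 q hq
          simp only [pdu_eq, pdv_eq] at this
          linarith
        have hyx : fderiv ℝ (fun q => fderiv ℝ y q (0, 1)) p (0, 1)
            = fderiv ℝ (fun q => fderiv ℝ x q (1, 0)) p (0, 1) := by
          rw [hCRev.fderiv_eq]
        have hschw : fderiv ℝ (fun q => fderiv ℝ x q (1, 0)) p (0, 1)
            = fderiv ℝ (fun q => fderiv ℝ x q (0, 1)) p (1, 0) :=
          schwarz (hx.contDiffAt hnh) (1, 0) (0, 1)
        have hcr1p := hCR1 p hp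
        simp only [pdu_eq, pdv_eq] at hcr1p
        rw [hyx, hschw]
        have hcr1p' : (fderiv ℝ y p) (0, 1) = (fderiv ℝ x p) (1, 0) := by linarith
        rw [hcr1p']
        linear_combination hh
      obtain ⟨τ, hτ⟩ := poincare hU hconv hP1 hQ1 hclosed hp₀
      have hτu : ∀ p ∈ U, pdu τ p = pdv z p + x p * pdv y p := by
        intro p hp
        have := (hτ p hp).fderiv
        simp only [pdu_eq, pdv_eq]
        rw [this]
        simp
      have hτv : ∀ p ∈ U, pdv τ p = x p * pdv x p - pdu z p := by
        intro p hp
        have := (hτ p hp).fderiv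
        simp only [pdu_eq, pdv_eq]
        rw [this]
        simp
      have hτ2 : ContDiffOn ℝ 2 τ U := by
        rw [← one_add_one_eq_two]
        refine (contDiffOn_succ_iff_fderiv_of_isOpen hU).mpr
          ⟨fun p hp => (hτ p hp).differentiableAt.differentiableWithinAt, ?_, ?_⟩
        · intro h; simp at h
        · exact ((hP1.smul contDiffOn_const).add (hQ1.smul contDiffOn_const)).congr
            (fun p hp => (hτ p hp).fderiv)
      refine ⟨τ, hτ2, hτu, hτv, fun p hp => ⟨hCR1 p hp, hCR2 p hp, ?_, ?_⟩⟩
      · have := hτu p hp; linarith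
      · have := hτv p hp; linarith
  · -- uniqueness
    rintro ⟨p₀, hp₀⟩ _ τ₁ τ₂ h1 h2 hd1 hd2
    refine ⟨τ₁ p₀ - τ₂ p₀, fun p hp => ?_⟩
    have hdiff : DifferentiableOn ℝ (fun q => τ₁ q - τ₂ q) U := fun q hq =>
      (((h1.contDiffAt (hU.mem_nhds hq)).differentiableAt two_ne_zero).sub
        ((h2.contDiffAt (hU.mem_nhds hq)).differentiableAt two_ne_zero)).differentiableWithinAt
    have hzero : ∀ q ∈ U, fderivWithin ℝ (fun q => τ₁ q - τ₂ q) U q = 0 := by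
      intro q hq
      rw [fderivWithin_of_isOpen hU hq]
      have ha : DifferentiableAt ℝ τ₁ q :=
        (h1.contDiffAt (hU.mem_nhds hq)).differentiableAt two_ne_zero
      have hb : DifferentiableAt ℝ τ₂ q :=
        (h2.contDiffAt (hU.mem_nhds hq)).differentiableAt two_ne_zero
      apply clm_eq_zero
      · have e1 := (hd1 q hq).1
        have e2 := (hd2 q hq).1
        simp only [pdu_eq, pdv_eq] at e1 e2
        rw [fderiv_fun_sub ha hb]
        simp only [ContinuousLinearMap.coe_sub', Pi.sub_apply]
        rw [e1, e2]; ring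
      · have e1 := (hd1 q hq).2
        have e2 := (hd2 q hq).2
        simp only [pdu_eq, pdv_eq] at e1 e2
        rw [fderiv_fun_sub ha hb]
        simp only [ContinuousLinearMap.coe_sub', Pi.sub_apply]
        rw [e1, e2]; ring
    have key := hconv.norm_image_sub_le_of_norm_fderivWithin_le hdiff
      (C := 0) (fun q hq => by rw [hzero q hq]; simp) hp₀ hp
    simp only [zero_mul, norm_le_zero_iff, sub_eq_zero] at key
    linarith [key]
end

section
/- Define F : ℝ² → ℝ⁴ by F(u,v) = (x,y,z,τ)(u,v) = (e^{−u}cos v, −e^{−u}sin v, v, u + (1/2)e^{−2u}cos²v). Then: (1) F satisfies the ∂̄_J system (i) ∂_u x − ∂_v y = 0, (ii) ∂_u y + ∂_v x = 0, (iii) ∂_u τ − ∂_v z = x·∂_v y, (iv) ∂_u z + ∂_v τ = x·∂_v x on all of ℝ²; (2) F(u,0) has y-coordinate 0 and positive x-coordinate, and F(u,π/2) has x-coordinate 0 and negative y-coordinate, for every u; (3) as u → ∞, τ(u,v) → +∞ and (x,y)(u,v) → (0,0) uniformly in v, so (x,y,z)(u,v) → (0,0,v) uniformly in v; i.e., F tends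 asymptotically at +∞ to the Reeb strip over the vertical Reeb chord at the origin. (This is the straight-line local model of equation (4.16) in the paper.) -/
open Real

/-- The `x`-component of the straight-line model `F(u,v) = e^{-u}cos v`. -/
noncomputable def slX (p : ℝ × ℝ) : ℝ := Real.exp (-p.1) * Real.cos p.2

/-- The `y`-component of the straight-line model `F(u,v) = -e^{-u}sin v`. -/
noncomputable def slY (p : ℝ × ℝ) : ℝ := -(Real.exp (-p.1) * Real.sin p.2)

/-- The `z`-component of the straight-line model `F(u,v) = v`. -/
noncomputable def slZ (p : ℝ × ℝ) : ℝ := p.2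

/-- The `τ`-component of the straight-line model
`F(u,v) = u + (1/2)e^{-2u}cos²v`. -/
noncomputable def slT (p : ℝ × ℝ) : ℝ :=
  p.1 + (1 / 2) * Real.exp (-(2 * p.1)) * (Real.cos p.2) ^ 2

section Aux

open ContinuousLinearMap

lemma aux_hExpU (p : ℝ × ℝ) : HasFDerivAt (fun q : ℝ × ℝ => Real.exp (-q.1))
    ((-Real.exp (-p.1)) • ContinuousLinearMap.fst ℝ ℝ ℝ) p := by
  have h : HasDerivAt (fun u : ℝ => Real.exp (-u)) (-Real.exp (-p.1)) p.1 := by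
    simpa [Function.comp_def] using ((Real.hasDerivAt_exp (-p.1)).comp p.1 ((hasDerivAt_id p.1).neg))
  exact h.comp_hasFDerivAt p hasFDerivAt_fst

lemma aux_hExp2U (p : ℝ × ℝ) : HasFDerivAt (fun q : ℝ × ℝ => Real.exp (-(2 * q.1)))
    ((-2 * Real.exp (-(2 * p.1))) • ContinuousLinearMap.fst ℝ ℝ ℝ) p := by
  have h : HasDerivAt (fun u : ℝ => Real.exp (-(2 * u))) (-2 * Real.exp (-(2 * p.1))) p.1 := by
    have h2 : HasDerivAt (fun u : ℝ => -(2 * u)) (-2) p.1 := by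
      simpa [Pi.neg_def] using ((hasDerivAt_id p.1).const_mul 2).neg
    simpa [mul_comm, Function.comp_def] using (Real.hasDerivAt_exp (-(2 * p.1))).comp p.1 h2
  exact h.comp_hasFDerivAt p hasFDerivAt_fst

lemma aux_hCosV (p : ℝ × ℝ) : HasFDerivAt (fun q : ℝ × ℝ => Real.cos q.2)
    ((-Real.sin p.2) • ContinuousLinearMap.snd ℝ ℝ ℝ) p :=
  (Real.hasDerivAt_cos p.2).comp_hasFDerivAt p hasFDerivAt_snd

lemma aux_hSinV (p : ℝ × ℝ) : HasFDerivAt (fun q : ℝ × ℝ => Real.sin q.2)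
    ((Real.cos p.2) • ContinuousLinearMap.snd ℝ ℝ ℝ) p :=
  (Real.hasDerivAt_sin p.2).comp_hasFDerivAt p hasFDerivAt_snd

lemma aux_hCos2V (p : ℝ × ℝ) : HasFDerivAt (fun q : ℝ × ℝ => Real.cos q.2 ^ 2)
    ((2 * Real.cos p.2 ^ 1 * (-Real.sin p.2)) • ContinuousLinearMap.snd ℝ ℝ ℝ) p :=
  ((Real.hasDerivAt_cos p.2).pow 2).comp_hasFDerivAt p hasFDerivAt_snd

lemma aux_hX (p : ℝ × ℝ) : HasFDerivAt slX
    ((Real.exp (-p.1)) • ((-Real.sin p.2) • ContinuousLinearMap.snd ℝ ℝ ℝ)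
      + (Real.cos p.2) • ((-Real.exp (-p.1)) • ContinuousLinearMap.fst ℝ ℝ ℝ)) p :=
  (aux_hExpU p).mul (aux_hCosV p)

lemma aux_hY (p : ℝ × ℝ) : HasFDerivAt slY
    (-((Real.exp (-p.1)) • ((Real.cos p.2) • ContinuousLinearMap.snd ℝ ℝ ℝ)
      + (Real.sin p.2) • ((-Real.exp (-p.1)) • ContinuousLinearMap.fst ℝ ℝ ℝ))) p :=
  ((aux_hExpU p).mul (aux_hSinV p)).neg

lemma aux_hZ (p : ℝ × ℝ) : HasFDerivAt slZ (ContinuousLinearMap.snd ℝ ℝ ℝ) p :=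
  hasFDerivAt_snd

lemma aux_hT (p : ℝ × ℝ) : HasFDerivAt slT
    (ContinuousLinearMap.fst ℝ ℝ ℝ +
      (1 / 2 : ℝ) • ((Real.exp (-(2 * p.1))) • ((2 * Real.cos p.2 ^ 1 * (-Real.sin p.2)) • ContinuousLinearMap.snd ℝ ℝ ℝ)
        + (Real.cos p.2 ^ 2) • ((-2 * Real.exp (-(2 * p.1))) • ContinuousLinearMap.fst ℝ ℝ ℝ))) p := by
  have h := hasFDerivAt_fst.add (((aux_hExp2U p).mul (aux_hCos2V p)).const_smul (1 / 2 : ℝ))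
  have : slT = fun q : ℝ × ℝ => q.1 + (1 / 2 : ℝ) • (Real.exp (-(2 * q.1)) * Real.cos q.2 ^ 2) := by
    funext q; simp [slT, smul_eq_mul]; ring
  rw [this]; exact h

end Aux

/-- **The straight-line local model (equation (4.16))**:
`F(u,v) = (e^{−u}cos v, −e^{−u}sin v, v, u + ½e^{−2u}cos²v)`
(1) satisfies the `∂̄_J` system on all of `ℝ²`;
(2) maps the boundary lines `v = 0` and `v = π/2` of the strip to the positive
`x`-axis and the negative `y`-axis respectively;
(3) tends asymptotically, uniformly in `v ∈ [0, π/2]`, to the Reeb strip over the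
vertical Reeb chord at the origin: `τ → +∞` and `(x,y,z) → (0,0,v)` as `u → ∞`. -/
theorem straight_line_model :
    (∀ p : ℝ × ℝ,
      pdu slX p - pdv slY p = 0 ∧
      pdu slY p + pdv slX p = 0 ∧
      pdu slT p - pdv slZ p = slX p * pdv slY p ∧
      pdu slZ p + pdv slT p = slX p * pdv slX p) ∧
    (∀ u : ℝ,
      slY (u, 0) = 0 ∧ 0 < slX (u, 0) ∧
      slX (u, π / 2) = 0 ∧ slY (u, π / 2) < 0) ∧
    (∀ C : ℝ, ∃ u₀ : ℝ, ∀ u ≥ u₀, ∀ v ∈ Set.Icc 0 (π / 2), C ≤ slT (u, v)) ∧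
    (∀ ε > (0 : ℝ), ∃ u₀ : ℝ, ∀ u ≥ u₀, ∀ v ∈ Set.Icc 0 (π / 2),
      |slX (u, v)| < ε ∧ |slY (u, v)| < ε ∧ |slZ (u, v) - v| < ε) := by
  refine ⟨?_, ?_, ?_, ?_⟩
  · intro p
    have hx := (aux_hX p).fderiv
    have hy := (aux_hY p).fderiv
    have hz := (aux_hZ p).fderiv
    have ht := (aux_hT p).fderiv
    have e2 : -(2 * p.1) = -p.1 + -p.1 := by ring
    refine ⟨?_, ?_, ?_, ?_⟩ <;>
    · simp only [pdu, pdv, hx, hy, hz, ht, e2, Real.exp_add,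
        ContinuousLinearMap.add_apply, ContinuousLinearMap.smul_apply,
        ContinuousLinearMap.neg_apply, ContinuousLinearMap.coe_fst',
        ContinuousLinearMap.coe_snd', smul_eq_mul, slX]
      ring
  · intro u
    refine ⟨by simp [slY], by simp [slX, Real.exp_pos], by simp [slX], by simp [slY, Real.exp_pos]⟩
  · intro C
    refine ⟨C, fun u hu v _ => ?_⟩
    have h1 : 0 ≤ (1 / 2 : ℝ) * Real.exp (-(2 * u)) * (Real.cos v) ^ 2 := by positivity
    simp only [slT]; linarith
  · intro ε hε
    refine ⟨1 - Real.log ε, fun u hu v _ => ?_⟩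
    have hkey : Real.exp (-u) < ε := by
      have : -u ≤ Real.log ε - 1 := by linarith
      calc Real.exp (-u) ≤ Real.exp (Real.log ε - 1) := Real.exp_le_exp.2 this
        _ = ε * Real.exp (-1) := by rw [Real.exp_sub, Real.exp_log hε, Real.exp_neg]; ring
        _ < ε * 1 := by
            have := Real.exp_lt_one_iff.2 (by norm_num : (-1:ℝ) < 0)
            nlinarith
        _ = ε := by ring
    have hcos : |Real.cos v| ≤ 1 := Real.abs_cos_le_one v
    have hsin : |Real.sin v| ≤ 1 := Real.abs_sin_le_one v
    have hexp : (0:ℝ) < Real.exp (-u) := Real.exp_pos _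
    refine ⟨?_, ?_, by simp [slZ, hε]⟩
    · calc |slX (u, v)| = Real.exp (-u) * |Real.cos v| := by
            rw [slX]; rw [abs_mul, abs_of_pos hexp]
        _ ≤ Real.exp (-u) * 1 := by nlinarith
        _ < ε := by linarith
    · calc |slY (u, v)| = Real.exp (-u) * |Real.sin v| := by
            rw [slY, abs_neg, abs_mul, abs_of_pos hexp]
        _ ≤ Real.exp (-u) * 1 := by nlinarith
        _ < ε := by linarith
end

section
/- Let R be a commutative ring, V a type, and d : V → ℤ a degree function, and let A be the free associative unital R-algebra on V, ℤ-graded so that each generator v ∈ V is homogeneous of degree d(v). Let ∂ : A → A be an R-linear map which is homogeneous of degree −1, satisfies ∂² = 0, annihilates R, and satisfies the signed Leibniz rule ∂(ab) = (∂a)b + (−1)^{|a|} a(∂b) for homogeneous a. Fix i ∈ ℤ and let S_i(A) be the free associative unital R-algebra on V together with two new generators e₁ (of degree i) and e₂ (of degree i−1), with the unique degree −1, square-zero, signed-Leibniz differential ∂′ extending ∂ and satisfying ∂′e₁ = e₂, ∂′e₂ = 0. Then the natural inclusion ι : A → S_i(A) is a chain map inducing an isomorphism on homology: ker(∂)/im(∂)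 ≅ ker(∂′)/im(∂′) as graded R-modules. (Corollary 3.9 of the paper: homology of the DGA is invariant under stabilization.) -/
/-- The degree of a monomial (a word in the generators), given a degree function `d`
on the generators: the sum of the degrees of its letters. -/
def monomialDegree {V : Type*} (d : V → ℤ) (w : FreeMonoid V) : ℤ :=
  (w.toList.map d).sum

/-- The homogeneous component of degree `n` of the free associative unital
`R`-algebra on `V` (realized as the monoid algebra on the free monoid on `V`),
graded so that a generator `v` has degree `d v`: the `R`-submodule spanned by the
monomials of degree `n`. -/
noncomputable def homogComponent (R : Type*) [CommRing R] {V : Type*} (d : V → ℤ) (n : ℤ) :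
    Submodule R (MonoidAlgebra R (FreeMonoid V)) :=
  (Finsupp.supported R R {w : FreeMonoid V | monomialDegree d w = n}).comap
    (MonoidAlgebra.coeffLinearEquiv R).toLinearMap

namespace StabAux

open MonoidAlgebra

lemma sign_sq_smul {M : Type*} [AddCommGroup M] (n : ℤ) (x : M) :
    (Int.negOnePow n : ℤ) • (Int.negOnePow n : ℤ) • x = x := by
  rw [smul_smul, ← Units.val_mul, Int.units_mul_self, Units.val_one, one_smul]

lemma sign_sub_one_smul {M : Type*} [AddCommGroup M] (n : ℤ) (x : M) :
    (Int.negOnePow (n - 1) : ℤ) • x = -((Int.negOnePow n : ℤ) • x) := by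
  have h : Int.negOnePow (n - 1) = -Int.negOnePow n := by
    rw [sub_eq_add_neg, Int.negOnePow_add, Int.negOnePow_neg, Int.negOnePow_one, mul_neg_one]
  rw [h, Units.val_neg, neg_smul]

variable {R : Type*} [CommRing R] {V : Type*}

noncomputable section

variable (R) in
/-- projection of a word onto the pure part. -/
def strip : List (V ⊕ Fin 2) → MonoidAlgebra R (FreeMonoid V)
  | [] => 1
  | (Sum.inl v) :: t => single (FreeMonoid.of v) 1 * strip t
  | (Sum.inr _) :: _ => 0

variable (R) in
/-- value of the contracting homotopy on a word. -/
def hW (d : V → ℤ) : List (V ⊕ Fin 2) → MonoidAlgebra R (FreeMonoid (V ⊕ Fin 2))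
  | [] => 0
  | (Sum.inl v) :: t =>
      (Int.negOnePow (d v) : ℤ) • (single (FreeMonoid.of (Sum.inl v)) 1 * hW d t)
  | (Sum.inr j) :: t =>
      if j = 1 then single (FreeMonoid.ofList (Sum.inr 0 :: t)) 1 else 0

variable (R) in
def σm : MonoidAlgebra R (FreeMonoid (V ⊕ Fin 2)) →ₗ[R] MonoidAlgebra R (FreeMonoid V) :=
  (Finsupp.lsum R fun (w : FreeMonoid (V ⊕ Fin 2)) => LinearMap.toSpanSingleton R _ (strip R w.toList))
    ∘ₗ (MonoidAlgebra.coeffLinearEquiv R).toLinearMap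

variable (R) in
def Hm (d : V → ℤ) :
    MonoidAlgebra R (FreeMonoid (V ⊕ Fin 2)) →ₗ[R] MonoidAlgebra R (FreeMonoid (V ⊕ Fin 2)) :=
  (Finsupp.lsum R fun (w : FreeMonoid (V ⊕ Fin 2)) => LinearMap.toSpanSingleton R _ (hW R d w.toList))
    ∘ₗ (MonoidAlgebra.coeffLinearEquiv R).toLinearMap

lemma σm_single (w : FreeMonoid (V ⊕ Fin 2)) (r : R) :
    σm R (single w r) = r • strip R w.toList := by
  rw [σm, LinearMap.comp_apply]
  exact Finsupp.lsum_single _ _ _ _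

lemma Hm_single (d : V → ℤ) (w : FreeMonoid (V ⊕ Fin 2)) (r : R) :
    Hm R d (single w r) = r • hW R d w.toList := by
  rw [Hm, LinearMap.comp_apply]
  exact Finsupp.lsum_single _ _ _ _

lemma homog_eq {V' : Type*} (d : V' → ℤ) (n : ℤ) :
    homogComponent R d n = MonoidAlgebra.supported R R {w | monomialDegree d w = n} := rfl

lemma single_mem_supp {M : Type*} [Monoid M] {s : Set M} (w : M) (r : R) (h : w ∈ s) :
    single w r ∈ MonoidAlgebra.supported R R s :=
  Finsupp.single_mem_supported R r h

lemma single_mem_homog {V' : Type*} (d : V' → ℤ) (l : List V') (n : ℤ)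
    (h : (l.map d).sum = n) (r : R) :
    single (FreeMonoid.ofList l) r ∈ homogComponent R d n :=
  single_mem_supp _ r (by simp [monomialDegree, FreeMonoid.toList_ofList, h])

end

end StabAux

namespace StabAux
open MonoidAlgebra
variable {R : Type*} [CommRing R] {V : Type*}
noncomputable section

/-- span of pure words of degree m -/
def pureComp (R : Type*) [CommRing R] {V : Type*} (d' : V ⊕ Fin 2 → ℤ) (m : ℤ) :
    Submodule R (MonoidAlgebra R (FreeMonoid (V ⊕ Fin 2))) :=
  MonoidAlgebra.supported R R
    {w : FreeMonoid (V ⊕ Fin 2) | (∀ x ∈ w.toList, x.isLeft) ∧ monomialDegree d' w = m}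

/-- non-dependent span induction -/
lemma span_ind {M : Type*} [AddCommMonoid M] [Module R M] {s : Set M} {P : M → Prop}
    (mem : ∀ x ∈ s, P x) (zero : P 0) (add : ∀ x y, P x → P y → P (x + y))
    (smul : ∀ (r : R) x, P x → P (r • x)) {x : M} (hx : x ∈ Submodule.span R s) : P x :=
  Submodule.span_induction (p := fun x _ => P x) mem zero (fun a b _ _ => add a b)
    (fun r a _ => smul r a) hx

lemma hW_append (d : V → ℤ) (d' : V ⊕ Fin 2 → ℤ) (hd'l : ∀ v, d' (Sum.inl v) = d v)
    (a : List (V ⊕ Fin 2)) (ha : ∀ x ∈ a, x.isLeft) (t : List (V ⊕ Fin 2)) :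
    hW R d (a ++ t) =
      (Int.negOnePow ((a.map d').sum) : ℤ) • (single (FreeMonoid.ofList a) 1 * hW R d t) := by
  induction a with
  | nil => simp [FreeMonoid.ofList_nil, ← MonoidAlgebra.one_def]
  | cons x a' ih =>
    match x with
    | Sum.inr j => simpa using ha (Sum.inr j) (by simp)
    | Sum.inl v =>
      have ih' := ih (fun x hx => ha x (List.mem_cons_of_mem _ hx))
      show hW R d (Sum.inl v :: (a' ++ t)) = _
      rw [hW, ih', mul_smul_comm, smul_smul, ← Units.val_mul, ← Int.negOnePow_add,
        ← mul_assoc, MonoidAlgebra.single_mul_single, one_mul, ← FreeMonoid.ofList_cons]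
      simp [hd'l]

lemma Hm_mul (d : V → ℤ) (d' : V ⊕ Fin 2 → ℤ) (hd'l : ∀ v, d' (Sum.inl v) = d v)
    (m : ℤ) (z : MonoidAlgebra R (FreeMonoid (V ⊕ Fin 2))) (hz : z ∈ pureComp R d' m)
    (u : MonoidAlgebra R (FreeMonoid (V ⊕ Fin 2))) :
    Hm R d (z * u) = (Int.negOnePow m : ℤ) • (z * Hm R d u) := by
  rw [pureComp, MonoidAlgebra.supported_eq_span_single] at hz
  refine span_ind (P := fun z => Hm R d (z * u) = (Int.negOnePow m : ℤ) • (z * Hm R d u))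
    (fun x hx => ?_) ?_ (fun x y hx hy => ?_) (fun r x hx => ?_) hz
  case _ =>
    obtain ⟨w, ⟨hw, hdeg⟩, rfl⟩ := hx
    induction u using MonoidAlgebra.induction_linear with
    | zero => simp
    | add f g hf hg =>
      rw [mul_add, map_add, map_add, hf, hg, mul_add, smul_add]
    | single w' b =>
      show Hm R d (single w 1 * single w' b) = _
      rw [MonoidAlgebra.single_mul_single, one_mul, Hm_single, Hm_single,
        FreeMonoid.toList_mul,
        hW_append (R := R) d d' hd'l w.toList hw w'.toList]
      rw [FreeMonoid.ofList_toList]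
      have : (w.toList.map d').sum = m := hdeg
      rw [this, smul_comm, mul_smul_comm]
  case _ => simp
  case _ =>
    rw [add_mul, map_add, hx, hy, add_mul, smul_add]
  case _ =>
    rw [smul_mul_assoc, map_smul, hx, smul_mul_assoc, smul_comm]

lemma Hm_e1_mul (d : V → ℤ) (u : MonoidAlgebra R (FreeMonoid (V ⊕ Fin 2))) :
    Hm R d (single (FreeMonoid.of (Sum.inr 0 : V ⊕ Fin 2)) 1 * u) = 0 := by
  induction u using MonoidAlgebra.induction_linear with
  | zero => simp
  | add f g hf hg => rw [mul_add, map_add, hf, hg, add_zero]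
  | single w b =>
    show Hm R d (single (FreeMonoid.of (Sum.inr 0)) 1 * single w b) = 0
    rw [MonoidAlgebra.single_mul_single, one_mul, Hm_single]
    have : (FreeMonoid.of (Sum.inr 0 : V ⊕ Fin 2) * w).toList
        = Sum.inr 0 :: w.toList := by
      rw [FreeMonoid.toList_mul, FreeMonoid.toList_of]; rfl
    rw [this]
    show b • (if (0 : Fin 2) = 1 then _ else 0) = 0
    simp

lemma Hm_e2_mul (d : V → ℤ) (u : MonoidAlgebra R (FreeMonoid (V ⊕ Fin 2))) :
    Hm R d (single (FreeMonoid.of (Sum.inr 1 : V ⊕ Fin 2)) 1 * u)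
      = single (FreeMonoid.of (Sum.inr 0 : V ⊕ Fin 2)) 1 * u := by
  induction u using MonoidAlgebra.induction_linear with
  | zero => simp
  | add f g hf hg => rw [mul_add, map_add, hf, hg, mul_add]
  | single w b =>
    show Hm R d (single (FreeMonoid.of (Sum.inr 1)) 1 * single w b) = _
    rw [MonoidAlgebra.single_mul_single, one_mul, Hm_single]
    have h1 : (FreeMonoid.of (Sum.inr 1 : V ⊕ Fin 2) * w).toList
        = Sum.inr 1 :: w.toList := by
      rw [FreeMonoid.toList_mul, FreeMonoid.toList_of]; rfl
    rw [h1]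
    show b • (if (1 : Fin 2) = 1 then single (FreeMonoid.ofList (Sum.inr 0 :: w.toList)) 1 else 0) = _
    rw [if_pos rfl, MonoidAlgebra.single_mul_single, one_mul,
      MonoidAlgebra.smul_single', mul_one, FreeMonoid.ofList_cons, FreeMonoid.ofList_toList]

end
end StabAux

namespace StabAux
open MonoidAlgebra
variable {R : Type*} [CommRing R] {V : Type*}
noncomputable section

variable (R V) in
def ιdef : MonoidAlgebra R (FreeMonoid V) →ₐ[R] MonoidAlgebra R (FreeMonoid (V ⊕ Fin 2)) :=
  MonoidAlgebra.lift R _ (FreeMonoid V)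
    (FreeMonoid.lift fun v => MonoidAlgebra.single (FreeMonoid.of (Sum.inl v)) (1 : R))

lemma ιdef_single (l : List V) :
    ιdef R V (single (FreeMonoid.ofList l) 1)
      = single (FreeMonoid.ofList (l.map Sum.inl)) (1 : R) := by
  induction l with
  | nil =>
    rw [FreeMonoid.ofList_nil, List.map_nil, FreeMonoid.ofList_nil, ← MonoidAlgebra.one_def,
      map_one]
    exact MonoidAlgebra.one_def
  | cons x t ih =>
    rw [FreeMonoid.ofList_cons, List.map_cons, FreeMonoid.ofList_cons]
    have h1 : (single (FreeMonoid.of x * FreeMonoid.ofList t) (1:R) :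
        MonoidAlgebra R (FreeMonoid V))
        = single (FreeMonoid.of x) 1 * single (FreeMonoid.ofList t) 1 := by
      rw [MonoidAlgebra.single_mul_single, one_mul]
    have h2 : (single (FreeMonoid.of (Sum.inl x) * FreeMonoid.ofList (t.map Sum.inl)) (1:R) :
        MonoidAlgebra R (FreeMonoid (V ⊕ Fin 2)))
        = single (FreeMonoid.of (Sum.inl x)) 1 * single (FreeMonoid.ofList (t.map Sum.inl)) 1 := by
      rw [MonoidAlgebra.single_mul_single, one_mul]
    rw [h1, h2, map_mul, ih]
    congr 1
    rw [ιdef, MonoidAlgebra.lift_single, one_smul, FreeMonoid.lift_eval_of]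

lemma ι_mem_pure (d : V → ℤ) (d' : V ⊕ Fin 2 → ℤ) (hd'l : ∀ v, d' (Sum.inl v) = d v)
    (m : ℤ) (a : MonoidAlgebra R (FreeMonoid V)) (ha : a ∈ homogComponent R d m) :
    ιdef R V a ∈ pureComp R d' m := by
  rw [homog_eq, MonoidAlgebra.supported_eq_span_single] at ha
  refine span_ind (P := fun a => ιdef R V a ∈ pureComp R d' m)
    (fun x hx => ?_) ?_ (fun x y hx hy => ?_) (fun r x hx => ?_) ha
  case _ =>
    obtain ⟨w, hw, rfl⟩ := hx
    show ιdef R V (single w 1) ∈ pureComp R d' m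
    have hww : (single w 1 : MonoidAlgebra R (FreeMonoid V))
        = single (FreeMonoid.ofList w.toList) 1 := by rw [FreeMonoid.ofList_toList]
    rw [hww, ιdef_single]
    refine single_mem_supp _ 1 ?_
    constructor
    · intro x hx
      rw [FreeMonoid.toList_ofList] at hx
      obtain ⟨v, _, rfl⟩ := List.mem_map.mp hx
      rfl
    · show monomialDegree d' _ = m
      rw [monomialDegree, FreeMonoid.toList_ofList, List.map_map]
      have : d' ∘ Sum.inl = d := funext hd'l
      rw [this]
      exact hw
  case _ => simp
  case _ =>
    rw [map_add]; exact Submodule.add_mem _ hx hy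
  case _ =>
    rw [map_smul]; exact Submodule.smul_mem _ _ hx

lemma strip_map_inl (l : List V) :
    strip R (l.map Sum.inl : List (V ⊕ Fin 2))
      = single (FreeMonoid.ofList l) (1 : R) := by
  induction l with
  | nil =>
    rw [List.map_nil, strip, FreeMonoid.ofList_nil]
    exact MonoidAlgebra.one_def
  | cons x t ih =>
    rw [List.map_cons, strip, ih, MonoidAlgebra.single_mul_single, one_mul,
      ← FreeMonoid.ofList_cons]

lemma σι (a : MonoidAlgebra R (FreeMonoid V)) : σm R (ιdef R V a) = a := by
  induction a using MonoidAlgebra.induction_linear with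
  | zero => simp
  | add f g hf hg => rw [map_add, map_add, hf, hg]
  | single w b =>
    show σm R (ιdef R V (single w b)) = single w b
    have hb : (single w b : MonoidAlgebra R (FreeMonoid V)) = b • single w 1 := by
      rw [MonoidAlgebra.smul_single', mul_one]
    rw [hb, map_smul, map_smul]
    have : (single w 1 : MonoidAlgebra R (FreeMonoid V))
        = single (FreeMonoid.ofList w.toList) 1 := by rw [FreeMonoid.ofList_toList]
    rw [this, ιdef_single, σm_single, FreeMonoid.toList_ofList, strip_map_inl, one_smul]

lemma single_of_mul_mem (d : V → ℤ) (v : V) (m : ℤ) (a : MonoidAlgebra R (FreeMonoid V))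
    (ha : a ∈ homogComponent R d m) :
    single (FreeMonoid.of v) (1 : R) * a ∈ homogComponent R d (d v + m) := by
  rw [homog_eq, MonoidAlgebra.supported_eq_span_single] at ha
  refine span_ind (P := fun a => single (FreeMonoid.of v) (1:R) * a ∈ homogComponent R d (d v + m))
    (fun x hx => ?_) ?_ (fun x y hx hy => ?_) (fun r x hx => ?_) ha
  case _ =>
    obtain ⟨w, hw, rfl⟩ := hx
    show single (FreeMonoid.of v) (1:R) * single w 1 ∈ homogComponent R d (d v + m)
    rw [MonoidAlgebra.single_mul_single, one_mul]
    refine single_mem_supp _ 1 ?_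
    show monomialDegree d _ = d v + m
    have hw' : (w.toList.map d).sum = m := hw
    rw [monomialDegree, FreeMonoid.toList_mul, FreeMonoid.toList_of]
    simp only [List.map_append, List.sum_append, List.map_cons, List.map_nil, List.sum_cons,
      List.sum_nil, add_zero]
    rw [hw']
  case _ => simp
  case _ =>
    rw [mul_add]; exact Submodule.add_mem _ hx hy
  case _ =>
    rw [mul_smul_comm]; exact Submodule.smul_mem _ _ hx

lemma strip_mem (d : V → ℤ) (d' : V ⊕ Fin 2 → ℤ) (hd'l : ∀ v, d' (Sum.inl v) = d v)
    (l : List (V ⊕ Fin 2)) :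
    strip R l ∈ homogComponent R d ((l.map d').sum) := by
  induction l with
  | nil =>
    rw [strip, MonoidAlgebra.one_def]
    exact single_mem_supp _ 1 (by simp [monomialDegree])
  | cons x t ih =>
    match x with
    | Sum.inr j => rw [strip]; exact Submodule.zero_mem _
    | Sum.inl v =>
      rw [strip, List.map_cons, List.sum_cons, hd'l]
      exact single_of_mul_mem d v _ _ ih

lemma σm_mem (d : V → ℤ) (d' : V ⊕ Fin 2 → ℤ) (hd'l : ∀ v, d' (Sum.inl v) = d v)
    (n : ℤ) (z : MonoidAlgebra R (FreeMonoid (V ⊕ Fin 2)))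
    (hz : z ∈ homogComponent R d' n) : σm R z ∈ homogComponent R d n := by
  rw [homog_eq, MonoidAlgebra.supported_eq_span_single] at hz
  refine span_ind (P := fun z => σm R z ∈ homogComponent R d n)
    (fun x hx => ?_) ?_ (fun x y hx hy => ?_) (fun r x hx => ?_) hz
  case _ =>
    obtain ⟨w, hw, rfl⟩ := hx
    show σm R (single w 1) ∈ homogComponent R d n
    rw [σm_single, one_smul]
    have := strip_mem (R := R) d d' hd'l w.toList
    rwa [show (w.toList.map d').sum = n from hw] at this
  case _ => simp
  case _ =>
    rw [map_add]; exact Submodule.add_mem _ hx hy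
  case _ =>
    rw [map_smul]; exact Submodule.smul_mem _ _ hx

end
end StabAux

namespace StabAux
open MonoidAlgebra
variable {R : Type*} [CommRing R] {V : Type*}
noncomputable section

lemma add_aux {M : Type*} [AddCommGroup M] (f g A B X Y : M) :
    f - A - X + (g - B - Y) + (X + Y) = f + g - (A + B) := by abel

lemma homotopy (d : V → ℤ) (i : ℤ) (d' : V ⊕ Fin 2 → ℤ)
    (hd'l : ∀ v, d' (Sum.inl v) = d v)
    (hd'0 : d' (Sum.inr 0) = i) (hd'1 : d' (Sum.inr 1) = i - 1)
    (D : MonoidAlgebra R (FreeMonoid V) →ₗ[R] MonoidAlgebra R (FreeMonoid V))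
    (D' : MonoidAlgebra R (FreeMonoid (V ⊕ Fin 2)) →ₗ[R]
      MonoidAlgebra R (FreeMonoid (V ⊕ Fin 2)))
    (hDdeg : ∀ n : ℤ, ∀ a ∈ homogComponent R d n, D a ∈ homogComponent R d (n - 1))
    (hD'leib : ∀ n : ℤ, ∀ a ∈ homogComponent R d' n, ∀ b,
      D' (a * b) = D' a * b + (Int.negOnePow n : ℤ) • (a * D' b))
    (hD'ann : ∀ r : R, D' (algebraMap R (MonoidAlgebra R (FreeMonoid (V ⊕ Fin 2))) r) = 0)
    (hext : ∀ a, D' (ιdef R V a) = ιdef R V (D a))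
    (he₁ : D' (single (FreeMonoid.of (Sum.inr 0 : V ⊕ Fin 2)) (1 : R))
      = single (FreeMonoid.of (Sum.inr 1 : V ⊕ Fin 2)) (1 : R))
    (he₂ : D' (single (FreeMonoid.of (Sum.inr 1 : V ⊕ Fin 2)) (1 : R)) = 0) :
    ∀ z, D' (Hm R d z) + Hm R d (D' z) = z - ιdef R V (σm R z) := by
  have hx_mem : ∀ x : V ⊕ Fin 2,
      (single (FreeMonoid.of x) 1 : MonoidAlgebra R (FreeMonoid (V ⊕ Fin 2)))
        ∈ homogComponent R d' (d' x) := by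
    intro x
    have h := single_mem_homog (R := R) d' [x] (d' x) (by simp) 1
    rwa [FreeMonoid.ofList_singleton] at h
  have HmofList : ∀ l : List (V ⊕ Fin 2),
      Hm R d (single (FreeMonoid.ofList l) (1 : R)) = hW R d l := by
    intro l
    rw [Hm_single, FreeMonoid.toList_ofList, one_smul]
  have leib : ∀ (x : V ⊕ Fin 2) (t : List (V ⊕ Fin 2)),
      D' (single (FreeMonoid.ofList (x :: t)) 1)
        = D' (single (FreeMonoid.of x) 1) * single (FreeMonoid.ofList t) 1
          + (Int.negOnePow (d' x) : ℤ) •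
            (single (FreeMonoid.of x) 1 * D' (single (FreeMonoid.ofList t) 1)) := by
    intro x t
    have h1 : (single (FreeMonoid.ofList (x :: t)) (1:R) :
        MonoidAlgebra R (FreeMonoid (V ⊕ Fin 2)))
        = single (FreeMonoid.of x) 1 * single (FreeMonoid.ofList t) 1 := by
      rw [MonoidAlgebra.single_mul_single, one_mul, ← FreeMonoid.ofList_cons]
    rw [h1, hD'leib (d' x) _ (hx_mem x)]
  have main : ∀ l : List (V ⊕ Fin 2),
      D' (Hm R d (single (FreeMonoid.ofList l) 1))
        + Hm R d (D' (single (FreeMonoid.ofList l) 1))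
        = single (FreeMonoid.ofList l) 1 - ιdef R V (strip R l) := by
    intro l
    induction l with
    | nil =>
      have e0 : (single (FreeMonoid.ofList ([] : List (V ⊕ Fin 2))) (1:R) :
          MonoidAlgebra R (FreeMonoid (V ⊕ Fin 2)))
          = algebraMap R (MonoidAlgebra R (FreeMonoid (V ⊕ Fin 2))) 1 := by
        rw [map_one, FreeMonoid.ofList_nil]
        exact MonoidAlgebra.one_def.symm
      rw [HmofList, show hW R d ([] : List (V ⊕ Fin 2)) = 0 from rfl, map_zero, zero_add,
        e0, hD'ann, map_zero]
      rw [show strip R ([] : List (V ⊕ Fin 2)) = (1 : MonoidAlgebra R (FreeMonoid V)) from rfl,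
        map_one, map_one, sub_self]
    | cons x t ih =>
      obtain v | j := x
      · -- x = inl v
        have hgvι : ιdef R V (single (FreeMonoid.of v) 1)
            = single (FreeMonoid.of (Sum.inl v)) (1:R) := by
          have h := ιdef_single (R := R) (V := V) [v]
          rwa [FreeMonoid.ofList_singleton, List.map_singleton,
            FreeMonoid.ofList_singleton] at h
        have hDgv : D' (single (FreeMonoid.of (Sum.inl v)) (1:R))
            = ιdef R V (D (single (FreeMonoid.of v) 1)) := by
          rw [← hgvι, hext]
        have hvmem : (single (FreeMonoid.of v) 1 : MonoidAlgebra R (FreeMonoid V))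
            ∈ homogComponent R d (d v) := by
          have h := single_mem_homog (R := R) d [v] (d v) (by simp) 1
          rwa [FreeMonoid.ofList_singleton] at h
        have hbmem := hDdeg (d v) _ hvmem
        have hιb := ι_mem_pure d d' hd'l _ _ hbmem
        have hgvmem : (single (FreeMonoid.of (Sum.inl v)) 1 :
            MonoidAlgebra R (FreeMonoid (V ⊕ Fin 2))) ∈ pureComp R d' (d v) := by
          refine single_mem_supp _ 1 ⟨?_, ?_⟩
          · intro x hx
            rw [FreeMonoid.toList_of, List.mem_singleton] at hx
            subst hx; rfl
          · show monomialDegree d' _ = d v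
            rw [monomialDegree, FreeMonoid.toList_of]
            simp [hd'l]
        have e1 : D' (Hm R d (single (FreeMonoid.ofList (Sum.inl v :: t)) 1))
            = (Int.negOnePow (d v) : ℤ) •
                (ιdef R V (D (single (FreeMonoid.of v) 1))
                  * Hm R d (single (FreeMonoid.ofList t) 1))
              + single (FreeMonoid.of (Sum.inl v)) 1
                  * D' (Hm R d (single (FreeMonoid.ofList t) 1)) := by
          rw [HmofList,
            show hW R d (Sum.inl v :: t) = (Int.negOnePow (d v) : ℤ) •
              (single (FreeMonoid.of (Sum.inl v)) 1 * hW R d t) from rfl,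
            ← HmofList, map_zsmul, hD'leib (d v) _ (by rw [← hd'l v]; exact hx_mem (Sum.inl v)),
              hDgv, smul_add, sign_sq_smul]
        have e2 : Hm R d (D' (single (FreeMonoid.ofList (Sum.inl v :: t)) 1))
            = -((Int.negOnePow (d v) : ℤ) •
                (ιdef R V (D (single (FreeMonoid.of v) 1))
                  * Hm R d (single (FreeMonoid.ofList t) 1)))
              + single (FreeMonoid.of (Sum.inl v)) 1
                  * Hm R d (D' (single (FreeMonoid.ofList t) 1)) := by
          rw [leib (Sum.inl v) t, hDgv, hd'l v, map_add, map_zsmul,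
            Hm_mul d d' hd'l (d v - 1) _ hιb, Hm_mul d d' hd'l (d v) _ hgvmem,
            sign_sub_one_smul, sign_sq_smul]
        have e3 : single (FreeMonoid.ofList (Sum.inl v :: t)) (1:R)
            - ιdef R V (strip R (Sum.inl v :: t))
            = single (FreeMonoid.of (Sum.inl v)) 1
                * (D' (Hm R d (single (FreeMonoid.ofList t) 1))
                  + Hm R d (D' (single (FreeMonoid.ofList t) 1))) := by
          rw [ih, mul_sub,
            show strip R (Sum.inl v :: t) = single (FreeMonoid.of v) 1 * strip R t from rfl,
            map_mul, hgvι, MonoidAlgebra.single_mul_single, one_mul, ← FreeMonoid.ofList_cons]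
        rw [e1, e2, e3, mul_add]
        abel
      · obtain hj | hj : j = 0 ∨ j = 1 := by omega
        · subst hj
          -- x = e₁
          have hHm0 : Hm R d (single (FreeMonoid.ofList (Sum.inr (0 : Fin 2) :: t)) (1:R)) = 0 := by
            rw [HmofList]
            show (if (0 : Fin 2) = 1 then _ else 0) = 0
            simp
          rw [hHm0, map_zero, zero_add, leib (Sum.inr 0) t, he₁, hd'0, map_add, map_zsmul,
            Hm_e2_mul, Hm_e1_mul, smul_zero, add_zero,
            show strip R (Sum.inr (0 : Fin 2) :: t) = 0 from rfl, map_zero, sub_zero,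
            MonoidAlgebra.single_mul_single, one_mul, ← FreeMonoid.ofList_cons]
        · subst hj
          -- x = e₂
          have hHm1 : Hm R d (single (FreeMonoid.ofList (Sum.inr (1 : Fin 2) :: t)) (1:R))
              = single (FreeMonoid.of (Sum.inr 0)) 1 * single (FreeMonoid.ofList t) 1 := by
            rw [HmofList]
            show (if (1 : Fin 2) = 1 then
                (single (FreeMonoid.ofList (Sum.inr 0 :: t)) 1 :
                  MonoidAlgebra R (FreeMonoid (V ⊕ Fin 2))) else 0) = _
            rw [if_pos rfl, FreeMonoid.ofList_cons, MonoidAlgebra.single_mul_single, one_mul]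
          rw [hHm1, hD'leib i _ (by rw [← hd'0]; exact hx_mem (Sum.inr 0)), he₁,
            leib (Sum.inr 1) t, he₂, zero_mul, zero_add, hd'1, map_zsmul, Hm_e2_mul,
            sign_sub_one_smul,
            show strip R (Sum.inr (1 : Fin 2) :: t) = 0 from rfl, map_zero, sub_zero,
            MonoidAlgebra.single_mul_single, one_mul, ← FreeMonoid.ofList_cons]
          abel
  intro z
  induction z using MonoidAlgebra.induction_linear with
  | zero => simp
  | add f g hf hg =>
    simp only [map_add]
    rw [eq_sub_of_add_eq hf, eq_sub_of_add_eq hg]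
    exact add_aux _ _ _ _ _ _
  | single w b =>
    have h := main w.toList
    rw [FreeMonoid.ofList_toList] at h
    have hb : (single w b : MonoidAlgebra R (FreeMonoid (V ⊕ Fin 2))) = b • single w 1 := by
      rw [MonoidAlgebra.smul_single', mul_one]
    show D' (Hm R d (single w b)) + Hm R d (D' (single w b))
        = single w b - ιdef R V (σm R (single w b))
    rw [hb]
    simp only [map_smul]
    rw [← smul_add, h, smul_sub, σm_single, one_smul]

end
end StabAux

namespace StabAux
lemma sub_aux {M : Type*} [AddCommGroup M] {a b c : M} (h : a = b - c) : c = b - a := by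
  rw [h]; abel
end StabAux

/-- **Corollary 3.9**: the homology of a free differential graded algebra is
invariant under stabilization.  Here `A` is the free associative unital `R`-algebra
on `V` with generators graded by `d`, `D` is a degree `−1`, square-zero,
`R`-annihilating, signed-Leibniz differential on `A`, and `S_i(A)` is the free
algebra on `V ⊕ Fin 2` (adjoining `e₁ = inr 0` of degree `i` and `e₂ = inr 1` of
degree `i − 1`) with differential `D'` extending `D` via the natural inclusion `ι`
and satisfying `D' e₁ = e₂`, `D' e₂ = 0`.  Then `ι` is a chain map inducing an
isomorphism on homology `ker D / im D ≅ ker D' / im D'` as graded `R`-modules,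
expressed degreewise: `ι` is injective and surjective on homology classes of each
degree `n`. -/
theorem stabilization_homology_iso
    (R : Type*) [CommRing R] (V : Type*) (d : V → ℤ) (i : ℤ)
    (d' : V ⊕ Fin 2 → ℤ)
    (hd' : d' = Sum.elim d fun j => if j = 0 then i else i - 1)
    (ι : MonoidAlgebra R (FreeMonoid V) →ₐ[R] MonoidAlgebra R (FreeMonoid (V ⊕ Fin 2)))
    (hι : ι = MonoidAlgebra.lift R _ (FreeMonoid V)
      (FreeMonoid.lift fun v =>
        MonoidAlgebra.single (FreeMonoid.of (Sum.inl v)) (1 : R)))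
    (D : MonoidAlgebra R (FreeMonoid V) →ₗ[R] MonoidAlgebra R (FreeMonoid V))
    (D' : MonoidAlgebra R (FreeMonoid (V ⊕ Fin 2)) →ₗ[R]
      MonoidAlgebra R (FreeMonoid (V ⊕ Fin 2)))
    -- `D` is a degree `−1`, square-zero, signed-Leibniz differential annihilating `R`
    (hDdeg : ∀ n : ℤ, ∀ a ∈ homogComponent R d n, D a ∈ homogComponent R d (n - 1))
    (hDsq : ∀ a, D (D a) = 0)
    (hDann : ∀ r : R, D (algebraMap R (MonoidAlgebra R (FreeMonoid V)) r) = 0)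
    (hDleib : ∀ n : ℤ, ∀ a ∈ homogComponent R d n, ∀ b,
      D (a * b) = D a * b + (Int.negOnePow n : ℤ) • (a * D b))
    -- `D'` is likewise a degree `−1`, square-zero, signed-Leibniz differential
    (hD'deg : ∀ n : ℤ, ∀ a ∈ homogComponent R d' n, D' a ∈ homogComponent R d' (n - 1))
    (hD'sq : ∀ a, D' (D' a) = 0)
    (hD'ann : ∀ r : R,
      D' (algebraMap R (MonoidAlgebra R (FreeMonoid (V ⊕ Fin 2))) r) = 0)
    (hD'leib : ∀ n : ℤ, ∀ a ∈ homogComponent R d' n, ∀ b,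
      D' (a * b) = D' a * b + (Int.negOnePow n : ℤ) • (a * D' b))
    -- `D'` extends `D` and satisfies `D' e₁ = e₂`, `D' e₂ = 0`
    (hext : ∀ a, D' (ι a) = ι (D a))
    (he₁ : D' (MonoidAlgebra.single (FreeMonoid.of (Sum.inr 0 : V ⊕ Fin 2)) (1 : R))
      = MonoidAlgebra.single (FreeMonoid.of (Sum.inr 1 : V ⊕ Fin 2)) (1 : R))
    (he₂ : D' (MonoidAlgebra.single (FreeMonoid.of (Sum.inr 1 : V ⊕ Fin 2)) (1 : R))
      = 0) :
    -- `ι` is a chain map ...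
    (∀ a, D' (ι a) = ι (D a)) ∧
    -- ... inducing an isomorphism on homology, as graded `R`-modules:
    ∀ n : ℤ,
      -- injectivity on degree-`n` homology classes
      (∀ x ∈ homogComponent R d n, D x = 0 →
        (∃ y, D' y = ι x) → ∃ z, D z = x) ∧
      -- surjectivity onto degree-`n` homology classes
      (∀ x' ∈ homogComponent R d' n, D' x' = 0 →
        ∃ x ∈ homogComponent R d n, D x = 0 ∧ ∃ y, D' y = ι x - x') := by
  have hd'l : ∀ v, d' (Sum.inl v) = d v := by intro v; rw [hd']; rfl
  have hd'0 : d' (Sum.inr 0) = i := by rw [hd']; simp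
  have hd'1 : d' (Sum.inr 1) = i - 1 := by rw [hd']; simp
  have hιd : ι = StabAux.ιdef R V := hι
  subst hιd
  have K1 := StabAux.homotopy d i d' hd'l hd'0 hd'1 D D' hDdeg hD'leib hD'ann hext he₁ he₂
  have K2 : ∀ a, StabAux.σm R (StabAux.ιdef R V a) = a := fun a => StabAux.σι a
  have K3 : ∀ z, D' (StabAux.ιdef R V (StabAux.σm R z))
      = StabAux.ιdef R V (StabAux.σm R (D' z)) := by
    intro z
    have h1 : StabAux.ιdef R V (StabAux.σm R z)
        = z - (D' (StabAux.Hm R d z) + StabAux.Hm R d (D' z)) := StabAux.sub_aux (K1 z)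
    have h2 : StabAux.ιdef R V (StabAux.σm R (D' z))
        = D' z - (D' (StabAux.Hm R d (D' z)) + StabAux.Hm R d (D' (D' z))) :=
      StabAux.sub_aux (K1 (D' z))
    rw [h1, h2, map_sub, map_add, hD'sq, hD'sq, map_zero, add_zero, zero_add]
  refine ⟨hext, fun n => ⟨?_, ?_⟩⟩
  · intro x hx hDx hex
    obtain ⟨y, hy⟩ := hex
    refine ⟨StabAux.σm R y, ?_⟩
    have h1 : StabAux.ιdef R V (D (StabAux.σm R y)) = StabAux.ιdef R V x := by
      rw [← hext, K3, hy, K2]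
    have h2 := congrArg (StabAux.σm R) h1
    rwa [K2, K2] at h2
  · intro x' hx' hD'x'
    refine ⟨StabAux.σm R x', StabAux.σm_mem d d' hd'l n x' hx', ?_, -(StabAux.Hm R d x'), ?_⟩
    · have h1 : StabAux.ιdef R V (D (StabAux.σm R x')) = 0 := by
        rw [← hext, K3, hD'x', map_zero, map_zero]
      have h2 := congrArg (StabAux.σm R) h1
      rwa [K2, map_zero] at h2
    · have h := K1 x'
      rw [hD'x', map_zero, add_zero] at h
      rw [map_neg, h, neg_sub]
end
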